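/- Let g(x,p) = (1-px)² - p³(1-x)² + p³x²/3 for x ∈ [0,2] and p ∈ [0,1]. Then there exists a constant c₀ > 0 such that g(x,p)/x² ≥ c₀ for all x ∈ (0,2] and p ∈ [0,1]. -/
import Mathlib

lemma aux_q2 (p : ℝ) (hp0 : 0 ≤ p) (hp : p ≤ 11/20) :
    4/105 ≤ 1 - 4*p + 4*p^2 + p^3/3 := by
  nlinarith [sq_nonneg (p - 472/1000), sq_nonneg p, mul_nonneg hp0 (sq_nonneg (p-472/1000))]

lemma aux_disc (p : ℝ) (hp : 11/20 ≤ p) (hp1 : p ≤ 1) :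
    p^2*(1-p^2)^2 ≤ (p^2*(1 - 2*p/3) - 1/105) * (1 - p^3) := by
  nlinarith [sq_nonneg (1-p), sq_nonneg p, mul_nonneg (sub_nonneg.2 hp) (sub_nonneg.2 hp1),
    mul_nonneg (mul_nonneg (sub_nonneg.2 hp) (sub_nonneg.2 hp)) (sub_nonneg.2 hp1),
    mul_nonneg (sub_nonneg.2 hp) (sq_nonneg (1-p)), sq_nonneg ((1-p)*(p-11/20))]

/-- For `g(x,p) = (1-px)² - p³(1-x)² + p³x²/3`, there is a constant `c₀ > 0` such that
`g(x,p)/x² ≥ c₀` for all `x ∈ (0,2]` and `p ∈ [0,1]`. -/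
theorem g_div_sq_lower_bound :
    ∃ c₀ : ℝ, 0 < c₀ ∧
      ∀ x ∈ Set.Ioc (0:ℝ) 2, ∀ p ∈ Set.Icc (0:ℝ) 1,
        c₀ ≤ ((1 - p*x)^2 - p^3*(1 - x)^2 + p^3*x^2/3) / x^2 := by
  refine ⟨1/105, by norm_num, ?_⟩
  rintro x ⟨hx0, hx2⟩ p ⟨hp0, hp1⟩
  rw [le_div_iff₀ (by positivity)]
  have hb : 0 ≤ p * (1 - p^2) := mul_nonneg hp0 (by nlinarith)
  rcases le_or_gt p (11/20) with hp | hp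
  · -- boundary case: reduce to x = 2
    have hq2 := aux_q2 p hp0 hp
    have hc2b : 0 ≤ 1 - 2*p + p^3 := by nlinarith
    have hx4 : x^2 ≤ 4 := by nlinarith
    nlinarith [mul_nonneg hb (sq_nonneg (x-2)), mul_nonneg hc2b (sub_nonneg.2 hx4),
      mul_nonneg (sq_nonneg x) (sub_nonneg.2 hq2), sq_nonneg x]
  · -- interior case: discriminant argument with multiplier a - ε
    have hdisc := aux_disc p hp.le hp1
    have ha : (1:ℝ)/10 ≤ p^2*(1 - 2*p/3) - 1/105 := by nlinarith
    nlinarith [sq_nonneg ((p^2*(1 - 2*p/3) - 1/105)*x - p*(1-p^2)),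
      mul_nonneg (sub_nonneg.2 hdisc) (sq_nonneg x), sq_nonneg x, hx0.le]
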